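/- Fix d ≥ 2 and β ∈ (0,∞), let Q be an augmented β-arboreal gas Gibbs measure on Z^d, and let (A,Φ) be distributed as Q. Then: (1) (deletion tolerance) for every finite subgraph H of Z^d, the conditional probability Q(A ∩ H has no edges | 𝒢_H) is almost surely strictly positive; and (2) (merge tolerance) for every finite connected subgraph H of Z^d, the conditional probability Q(all vertices of H belong to a single equivalence class of the augmented connectivity relation of (A,Φ) | 𝒢_H) is almost surely strictly positive. -/

import Mathlib

open MeasureTheory
open scoped ENNReal symmDiff

noncomputable section

namespace ArborealGas

variable {V : Type*} (G : SimpleGraph V)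

/-- The (inner vertex) boundary of a subgraph `H` relative to the host subgraph `Γ` of `G`:
the vertices of `H` incident to an edge of `Γ` not belonging to `H`. -/
def bdry (Γ H : G.Subgraph) : Set V :=
  {v | v ∈ H.verts ∧ ∃ u, Γ.Adj v u ∧ ¬ H.Adj v u}

/-- Restriction of a relation to pairs inside a set. -/
def restrictRel (B : Set V) (φ : V → V → Prop) : V → V → Prop :=
  fun a b => a ∈ B ∧ b ∈ B ∧ φ a b

/-- `u` and `v` are connected in the quotient graph `F/φ` (the graph obtained from
`F` by identifying vertices of `F` lying in a common class of `φ`). -/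
def quotConn (F : G.Subgraph) (φ : V → V → Prop) : V → V → Prop :=
  Relation.ReflTransGen fun a b =>
    F.Adj a b ∨ (a ∈ F.verts ∧ b ∈ F.verts ∧ φ a b)

/-- `F` extends the boundary condition `φ` (an equivalence relation on the boundary of `H`
in the host `Γ`): the quotient `F/φ` is acyclic, i.e. every edge of `F` is a bridge of `F/φ`. -/
def Extends (Γ H : G.Subgraph) (φ : V → V → Prop) (F : G.Subgraph) : Prop :=
  ∀ a b, F.Adj a b →
    ¬ quotConn G (F.deleteEdges {s(a, b)}) (restrictRel (bdry G Γ H) φ) a b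

/-- `F` is a spanning forest of `H` extending the boundary condition `φ`:
an element of `𝓕(H,φ)` containing every vertex of `H`. -/
def IsSpanningForestExtending (Γ H : G.Subgraph) (φ : V → V → Prop) (F : G.Subgraph) : Prop :=
  F ≤ H ∧ F.verts = H.verts ∧ Extends G Γ H φ F

/-- `F` is an `(H,φ)`-maximal spanning forest: no edge of `H` can be added to `F`
while remaining a spanning forest extending `φ`. -/
def IsMaximalSpanningForestExtending (Γ H : G.Subgraph) (φ : V → V → Prop)
    (F : G.Subgraph) : Prop :=
  IsSpanningForestExtending G Γ H φ F ∧
    ∀ a b, (hab : H.Adj a b) → ¬ F.Adj a b →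
      ¬ IsSpanningForestExtending G Γ H φ (F ⊔ G.subgraphOfAdj (H.adj_sub hab))

open Classical in
/-- The unnormalized arboreal gas weight `β ^ |F|` of a spanning forest `F` of `H`
extending `φ` (with the convention `0 ^ 0 = 1`); for `β = ∞` the uniform weight on
`(H,φ)`-maximal spanning forests. -/
def gibbsWeight (β : ℝ≥0∞) (Γ H : G.Subgraph) (φ : V → V → Prop) (F : G.Subgraph) : ℝ≥0∞ :=
  if β = ⊤ then (if IsMaximalSpanningForestExtending G Γ H φ F then 1 else 0)
  else if IsSpanningForestExtending G Γ H φ F then β ^ F.edgeSet.ncard else 0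

/-- The σ-algebra on the space of subgraphs of `G`: the product (cylinder) σ-algebra,
generated by the vertex- and edge-membership maps. -/
instance subgraphMeasurableSpace : MeasurableSpace G.Subgraph :=
  MeasurableSpace.comap
    (fun S => ((fun v => v ∈ S.verts), S.Adj) :
      G.Subgraph → (V → Prop) × (V → V → Prop)) inferInstance

/-- The finite-volume `β`-arboreal gas Gibbs measure `P^φ_{H,β}` on the finite subgraph `H`
of the host graph `Γ` with boundary condition `φ`, regarded as a measure on subgraphs of `G`:
each spanning forest `F` of `H` extending `φ` gets probability proportional to `β ^ |F|`
(uniform on `(H,φ)`-maximal spanning forests when `β = ∞`). -/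
def finGibbs (β : ℝ≥0∞) (Γ H : G.Subgraph) (φ : V → V → Prop) : Measure G.Subgraph :=
  (∑' F : G.Subgraph, gibbsWeight G β Γ H φ F)⁻¹ •
    Measure.sum fun F : G.Subgraph => gibbsWeight G β Γ H φ F • Measure.dirac F

/-- The raw space in which augmented subgraphs of `G` live: pairs `(S, Φ)` of a subgraph `S`
of `G` and a boundary map `Φ` assigning to each (finite) subgraph `H` a relation on `V`.
It carries the product Borel σ-algebra. -/
abbrev AugSub := G.Subgraph × (G.Subgraph → V → V → Prop)

/-- `φ` is an equivalence relation on the set `B` (relating only elements of `B`). -/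
def IsEquivRelOn (B : Set V) (φ : V → V → Prop) : Prop :=
  (∀ u v, φ u v → u ∈ B ∧ v ∈ B) ∧ (∀ u ∈ B, φ u u) ∧
    (∀ u v, φ u v → φ v u) ∧ (∀ u v w, φ u v → φ v w → φ u w)

/-- `(S, Φ)` is an augmented subgraph of the host graph `Γ ≤ G`: `S ≤ Γ`, for each finite
subgraph `H` of `Γ` the relation `Φ(H)` is an equivalence relation on the boundary `∂H`,
and the consistency condition holds: for finite subgraphs `H ⊆ K` of `Γ` and `u, v ∈ ∂H`,
`u` and `v` are `Φ(H)`-related iff they are connected in `((S ⊓ K) ∖ E[H])/Φ(K)`. -/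
def IsAugmentedIn (Γ : G.Subgraph) (A : AugSub G) : Prop :=
  A.1 ≤ Γ ∧
  (∀ H : G.Subgraph, H ≤ Γ → H.verts.Finite → IsEquivRelOn (bdry G Γ H) (A.2 H)) ∧
  (∀ H K : G.Subgraph, H ≤ K → K ≤ Γ → K.verts.Finite →
    ∀ u v, u ∈ bdry G Γ H → v ∈ bdry G Γ H →
      (A.2 H u v ↔
        quotConn G ((A.1 ⊓ K).deleteEdges H.edgeSet)
          (restrictRel (bdry G Γ K) (A.2 K)) u v))

/-- The data of an augmented subgraph `(S, Φ)` determined outside the finite subgraph `H`: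
the subgraph `S ∖ E[H]` together with the family `Φ_H = (Φ(K) : K ⊇ H finite)`. -/
def outsideMap (Γ H : G.Subgraph) (A : AugSub G) :
    G.Subgraph × (G.Subgraph → V → V → Prop) :=
  (A.1.deleteEdges H.edgeSet,
    fun K u v => (H ≤ K ∧ K ≤ Γ ∧ K.verts.Finite) ∧ A.2 K u v)

/-- The σ-algebra `𝒢_H` on augmented subgraphs generated by `(S, Φ) ↦ (S ∖ E[H], Φ_H)`. -/
def outSigma (Γ H : G.Subgraph) : MeasurableSpace (AugSub G) :=
  MeasurableSpace.comap (outsideMap G Γ H) inferInstance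

/-- A tail event: an event belonging to `𝒢_H` for every finite subgraph `H`. -/
def IsTailEvent (Γ : G.Subgraph) (X : Set (AugSub G)) : Prop :=
  ∀ H : G.Subgraph, H ≤ Γ → H.verts.Finite → MeasurableSet[outSigma G Γ H] X

/-- `Q` is an augmented `β`-arboreal gas Gibbs measure on the host graph `Γ ≤ G`:
a probability measure on augmented subgraphs of `Γ` such that for every finite subgraph `H`
of `Γ` and every subgraph `F₀` of `H`, the conditional probability of `{A ∩ H = F₀}` given
`𝒢_H` is almost surely `P^{Φ(H)}_{H,β}(F₀)`. -/
def IsAugGibbs (β : ℝ≥0∞) (Γ : G.Subgraph) (Q : Measure (AugSub G)) : Prop :=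
  IsProbabilityMeasure Q ∧
  Q {A : AugSub G | IsAugmentedIn G Γ A} = 1 ∧
  ∀ H : G.Subgraph, H ≤ Γ → H.verts.Finite →
    ∀ F₀ : G.Subgraph, F₀ ≤ H →
      (Q[({A : AugSub G | A.1 ⊓ H = F₀}).indicator (fun _ => (1 : ℝ)) | outSigma G Γ H])
        =ᵐ[Q] fun A => (finGibbs G β Γ H (A.2 H) {F₀}).toReal

/-- `P` is a `β`-arboreal gas Gibbs measure on the host graph `Γ ≤ G`: the pushforward of
some augmented `β`-arboreal gas Gibbs measure (a Gibbs augmentation of `P`) under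
`(S, Φ) ↦ S`. -/
def IsGibbs (β : ℝ≥0∞) (Γ : G.Subgraph) (P : Measure G.Subgraph) : Prop :=
  ∃ Q : Measure (AugSub G), IsAugGibbs G β Γ Q ∧ Q.map Prod.fst = P

/-- The finite subgraph with vertex set `{u, v}` and no edges. -/
def pairSub (u v : V) : G.Subgraph where
  verts := {u, v}
  Adj _ _ := False
  adj_sub h := h.elim
  edge_vert h := h.elim
  symm := ⟨fun _ _ h => h.elim⟩

/-- The augmented connectivity relation of an augmented subgraph `(S, Φ)`:
`u ↔ v` iff `Φ({u,v})(u,v) = 1`. -/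
def augConn (A : AugSub G) (u v : V) : Prop :=
  A.2 (pairSub G u v) u v

/-- The subgraph of `G` induced by a set `I` of vertices. -/
def traceSub (I : Set V) : G.Subgraph where
  verts := I
  Adj u v := G.Adj u v ∧ u ∈ I ∧ v ∈ I
  adj_sub h := h.1
  edge_vert h := h.2.1
  symm := ⟨fun _ _ h => ⟨G.symm.symm _ _ h.1, h.2.2, h.2.1⟩⟩

/-- A subgraph is connected: nonempty vertex set, any two vertices joined by a path. -/
def SubConnected (S : G.Subgraph) : Prop :=
  S.verts.Nonempty ∧ ∀ u ∈ S.verts, ∀ v ∈ S.verts, Relation.ReflTransGen S.Adj u v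

/-- The hypercubic lattice `ℤ^d`: vertices `Fin d → ℤ`, edges between points at
`ℓ¹`-distance one. -/
def ZdGraph (d : ℕ) : SimpleGraph (Fin d → ℤ) where
  Adj x y := ∑ i, (x i - y i).natAbs = 1
  symm := by
    constructor
    intro x y h
    rw [← h]
    exact Finset.sum_congr rfl fun i _ => by omega
  loopless := by constructor; intro x h; simp at h

/-- Translation of subgraphs of `ℤ^d` by a lattice vector `t`. -/
def translateSub {d : ℕ} (t : Fin d → ℤ) (S : (ZdGraph d).Subgraph) : (ZdGraph d).Subgraph where
  verts := {v | v - t ∈ S.verts}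
  Adj u v := S.Adj (u - t) (v - t)
  adj_sub := by
    intro u v h
    have h2 := S.adj_sub h
    simpa [ZdGraph, sub_sub_sub_cancel_right] using h2
  edge_vert := by intro u v h; exact S.edge_vert h
  symm := ⟨fun _ _ h => S.symm.symm _ _ h⟩

/-- Translation of augmented subgraphs of `ℤ^d` by a lattice vector `t`:
`(τ_t Φ)(H)(u,v) = Φ(H - t)(u - t, v - t)`. -/
def translateAug {d : ℕ} (t : Fin d → ℤ) (A : AugSub (ZdGraph d)) : AugSub (ZdGraph d) :=
  (translateSub t A.1, fun K u v => A.2 (translateSub (-t) K) (u - t) (v - t))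

/-- A translation-invariant augmented `β`-arboreal gas Gibbs measure on `ℤ^d`. -/
def IsTransInvAugGibbs (d : ℕ) (β : ℝ≥0∞) (Q : Measure (AugSub (ZdGraph d))) : Prop :=
  IsAugGibbs (ZdGraph d) β ⊤ Q ∧ ∀ t, Q.map (translateAug t) = Q

/-- An extremal point of the convex set of translation-invariant augmented `β`-arboreal gas
Gibbs measures on `ℤ^d`. -/
def IsExtremalTransInvAugGibbs (d : ℕ) (β : ℝ≥0∞)
    (Q : Measure (AugSub (ZdGraph d))) : Prop :=
  IsTransInvAugGibbs d β Q ∧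
    ∀ (Q₁ Q₂ : Measure (AugSub (ZdGraph d))) (t : ℝ≥0∞), 0 < t → t < 1 →
      IsTransInvAugGibbs d β Q₁ → IsTransInvAugGibbs d β Q₂ →
      Q = t • Q₁ + (1 - t) • Q₂ → Q₁ = Q₂

section Aux

open Relation

/-! ### Logic/measurability helpers -/

private lemma msOfAnd {α : Type*} [MeasurableSpace α] {p q : α → Prop}
    (hp : MeasurableSet {a | p a}) (hq : MeasurableSet {a | q a}) :
    MeasurableSet {a | p a ∧ q a} := by
  rw [Set.setOf_and]; exact hp.inter hq

private lemma msOfOr {α : Type*} [MeasurableSpace α] {p q : α → Prop}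
    (hp : MeasurableSet {a | p a}) (hq : MeasurableSet {a | q a}) :
    MeasurableSet {a | p a ∨ q a} := by
  rw [Set.setOf_or]; exact hp.union hq

private lemma msOfNot {α : Type*} [MeasurableSpace α] {p : α → Prop}
    (hp : MeasurableSet {a | p a}) : MeasurableSet {a | ¬ p a} := by
  have h : {a | ¬ p a} = {a | p a}ᶜ := rfl
  rw [h]; exact hp.compl

private lemma msOfConst {α : Type*} [MeasurableSpace α] (c : Prop) :
    MeasurableSet {a : α | c} := by
  by_cases hc : c
  · simp [hc]
  · simp [hc]

private lemma msOfImp {α : Type*} [MeasurableSpace α] {p q : α → Prop}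
    (hp : MeasurableSet {a | p a}) (hq : MeasurableSet {a | q a}) :
    MeasurableSet {a | p a → q a} := by
  have h : {a | p a → q a} = {a | ¬ p a ∨ q a} := by ext a; simp [imp_iff_not_or]
  rw [h]; exact msOfOr (msOfNot hp) hq

private lemma msOfIff {α : Type*} [MeasurableSpace α] {p q : α → Prop}
    (hp : MeasurableSet {a | p a}) (hq : MeasurableSet {a | q a}) :
    MeasurableSet {a | p a ↔ q a} := by
  have h : {a | p a ↔ q a} = {a | (p a → q a) ∧ (q a → p a)} := by
    ext a; simp [iff_iff_implies_and_implies]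
  rw [h]; exact msOfAnd (msOfImp hp hq) (msOfImp hq hp)

/-! ### Reflexive-transitive closure helpers -/

private def chainTo {α : Type*} (r : α → α → Prop) : α → List α → α → Prop
  | u, [], v => u = v
  | u, x :: l, v => r u x ∧ chainTo r x l v

private lemma rtg_iff_chainTo {α : Type*} {r : α → α → Prop} {u v : α} :
    Relation.ReflTransGen r u v ↔ ∃ l : List α, chainTo r u l v := by
  constructor
  · intro h
    refine Relation.ReflTransGen.head_induction_on h ?_ ?_
    · exact ⟨[], rfl⟩
    · rintro a c hac _ ⟨l, hl⟩
      exact ⟨c :: l, hac, hl⟩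
  · rintro ⟨l, hl⟩
    induction l generalizing u with
    | nil => exact (show u = v from hl) ▸ Relation.ReflTransGen.refl
    | cons x l ih => exact Relation.ReflTransGen.head hl.1 (ih hl.2)

private lemma measurableSet_chainTo {α W : Type*} [MeasurableSpace α] {r : α → W → W → Prop}
    (hr : ∀ u v, MeasurableSet {a | r a u v}) :
    ∀ (u : W) (l : List W) (v : W), MeasurableSet {a | chainTo (r a) u l v} := by
  intro u l
  induction l generalizing u with
  | nil => intro v; simp only [chainTo]; exact msOfConst _
  | cons x l ih => intro v; simp only [chainTo]; exact msOfAnd (hr u x) (ih x v)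

private lemma measurableSet_rtg {α W : Type*} [MeasurableSpace α] [Countable W]
    {r : α → W → W → Prop} (hr : ∀ u v, MeasurableSet {a | r a u v}) (u v : W) :
    MeasurableSet {a | Relation.ReflTransGen (r a) u v} := by
  have h : {a | Relation.ReflTransGen (r a) u v} = ⋃ l : List W, {a | chainTo (r a) u l v} := by
    ext a
    simp only [Set.mem_iUnion, Set.mem_setOf_eq]
    exact rtg_iff_chainTo
  rw [h]
  exact MeasurableSet.iUnion fun l => measurableSet_chainTo hr u l v

private lemma exists_crossing {α : Type*} {r : α → α → Prop} {P : α → Prop} {u v : α}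
    (h : Relation.ReflTransGen r u v) (hu : P u) : ¬ P v → ∃ a b, r a b ∧ P a ∧ ¬ P b := by
  induction h with
  | refl => exact fun hv => absurd hu hv
  | @tail b c _ hbc ih =>
    intro hc
    by_cases hb : P b
    · exact ⟨b, c, hbc, hb, hc⟩
    · exact ih hb

private lemma rtg_decomp {α : Type*} {r : α → α → Prop} {a b x y : α}
    (h : Relation.ReflTransGen (fun p q => r p q ∨ (p = a ∧ q = b) ∨ (p = b ∧ q = a)) x y) :
    Relation.ReflTransGen r x y ∨
      (Relation.ReflTransGen r x a ∧ Relation.ReflTransGen r b y) ∨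
      (Relation.ReflTransGen r x b ∧ Relation.ReflTransGen r a y) := by
  induction h with
  | refl => exact Or.inl Relation.ReflTransGen.refl
  | @tail w z _ hwz ih =>
    rcases hwz with hr | ⟨rfl, rfl⟩ | ⟨rfl, rfl⟩
    · rcases ih with h1 | ⟨h1, h2⟩ | ⟨h1, h2⟩
      · exact Or.inl (h1.tail hr)
      · exact Or.inr (Or.inl ⟨h1, h2.tail hr⟩)
      · exact Or.inr (Or.inr ⟨h1, h2.tail hr⟩)
    · rcases ih with h1 | ⟨h1, _⟩ | ⟨h1, _⟩
      · exact Or.inr (Or.inl ⟨h1, Relation.ReflTransGen.refl⟩)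
      · exact Or.inr (Or.inl ⟨h1, Relation.ReflTransGen.refl⟩)
      · exact Or.inl h1
    · rcases ih with h1 | ⟨h1, _⟩ | ⟨h1, _⟩
      · exact Or.inr (Or.inr ⟨h1, Relation.ReflTransGen.refl⟩)
      · exact Or.inl h1
      · exact Or.inr (Or.inr ⟨h1, Relation.ReflTransGen.refl⟩)

/-! ### Graph helpers -/

private def edgelessSub (s : Set V) : G.Subgraph where
  verts := s
  Adj _ _ := False
  adj_sub h := h.elim
  edge_vert h := h.elim
  symm := ⟨fun _ _ h => h.elim⟩

private lemma edgelessSub_le (H : G.Subgraph) : edgelessSub G H.verts ≤ H :=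
  ⟨Set.Subset.rfl, fun _ _ h => h.elim⟩

private lemma edgelessSub_edgeSet (s : Set V) : (edgelessSub G s).edgeSet = ∅ := by
  ext e
  induction e using Sym2.ind with
  | _ a b => simp [SimpleGraph.Subgraph.mem_edgeSet, edgelessSub]

private lemma edgeless_sfe (Γ H : G.Subgraph) (φ : V → V → Prop) :
    IsSpanningForestExtending G Γ H φ (edgelessSub G H.verts) :=
  ⟨edgelessSub_le G H, rfl, fun _ _ h => h.elim⟩

private lemma edgeSet_finite_of_verts_finite {H : G.Subgraph} (h : H.verts.Finite) :
    H.edgeSet.Finite := by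
  refine ((h.prod h).image (fun p : V × V => s(p.1, p.2))).subset ?_
  intro e he
  induction e using Sym2.ind with
  | _ a b =>
    rw [SimpleGraph.Subgraph.mem_edgeSet] at he
    exact ⟨(a, b), ⟨H.edge_vert he, H.edge_vert (H.adj_symm he)⟩, rfl⟩

private lemma candidates_finite {H : G.Subgraph} (h : H.verts.Finite) :
    {F : G.Subgraph | F ≤ H ∧ F.verts = H.verts}.Finite := by
  have hE := edgeSet_finite_of_verts_finite G h
  refine Set.Finite.of_finite_image (f := fun F : G.Subgraph => F.edgeSet) ?_ ?_
  · refine hE.finite_subsets.subset ?_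
    rintro _ ⟨F, hF, rfl⟩
    exact SimpleGraph.Subgraph.edgeSet_mono hF.1
  · rintro F₁ h₁ F₂ h₂ he
    have he' : F₁.edgeSet = F₂.edgeSet := he
    refine SimpleGraph.Subgraph.ext (h₁.2.trans h₂.2.symm) ?_
    funext a b
    exact propext
      (by rw [← SimpleGraph.Subgraph.mem_edgeSet, ← SimpleGraph.Subgraph.mem_edgeSet, he'])

private lemma pairSub_edgeSet (u v : V) : (pairSub G u v).edgeSet = ∅ := by
  ext e
  induction e using Sym2.ind with
  | _ a b =>
    rw [SimpleGraph.Subgraph.mem_edgeSet]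
    simp [pairSub]

private lemma pairSub_le {H : G.Subgraph} {u v : V} (hu : u ∈ H.verts) (hv : v ∈ H.verts) :
    pairSub G u v ≤ H := by
  constructor
  · intro x hx
    rcases hx with rfl | hx
    · exact hu
    · rw [Set.mem_singleton_iff] at hx; subst hx; exact hv
  · intro a b h; exact h.elim

/-! ### Weights and the finite-volume measure -/

private lemma gibbsWeight_edgeless {β : ℝ≥0∞} (hβtop : β ≠ ⊤) (Γ H : G.Subgraph)
    (φ : V → V → Prop) : gibbsWeight G β Γ H φ (edgelessSub G H.verts) = 1 := by
  rw [gibbsWeight, if_neg hβtop, if_pos (edgeless_sfe G Γ H φ), edgelessSub_edgeSet]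
  simp

private lemma gibbsWeight_ne_top {β : ℝ≥0∞} (hβtop : β ≠ ⊤) (Γ H : G.Subgraph)
    (φ : V → V → Prop) (F : G.Subgraph) : gibbsWeight G β Γ H φ F ≠ ⊤ := by
  rw [gibbsWeight, if_neg hβtop]
  split
  · exact ENNReal.pow_ne_top hβtop
  · exact ENNReal.zero_ne_top

private lemma partition_bounds {β : ℝ≥0∞} (hβtop : β ≠ ⊤) {Γ H : G.Subgraph}
    (hfin : H.verts.Finite) (φ : V → V → Prop) :
    1 ≤ (∑' F : G.Subgraph, gibbsWeight G β Γ H φ F) ∧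
      (∑' F : G.Subgraph, gibbsWeight G β Γ H φ F) ≠ ⊤ := by
  constructor
  · calc (1 : ℝ≥0∞) = gibbsWeight G β Γ H φ (edgelessSub G H.verts) :=
        (gibbsWeight_edgeless G hβtop Γ H φ).symm
      _ ≤ _ := ENNReal.le_tsum _
  · have hsupp : ∀ F ∉ (candidates_finite G hfin).toFinset, gibbsWeight G β Γ H φ F = 0 := by
      intro F hF
      rw [gibbsWeight, if_neg hβtop,
        if_neg (fun hsfe : IsSpanningForestExtending G Γ H φ F =>
          hF ((candidates_finite G hfin).mem_toFinset.2 ⟨hsfe.1, hsfe.2.1⟩))]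
    rw [tsum_eq_sum hsupp]
    exact (ENNReal.sum_lt_top.2 fun F _ =>
      lt_top_iff_ne_top.2 (gibbsWeight_ne_top G hβtop Γ H φ F)).ne

private lemma measurable_proj :
    Measurable (fun S : G.Subgraph => (((fun v => v ∈ S.verts), S.Adj) :
      (V → Prop) × (V → V → Prop))) :=
  Measurable.of_comap_le le_rfl

private lemma measurableSet_mem_verts (v : V) :
    MeasurableSet {S : G.Subgraph | v ∈ S.verts} :=
  ⟨{p : (V → Prop) × (V → V → Prop) | p.1 v},
    measurableSet_setOf.2 ((measurable_pi_apply v).comp measurable_fst), rfl⟩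

private lemma measurableSet_adj (u v : V) :
    MeasurableSet {S : G.Subgraph | S.Adj u v} :=
  ⟨{p : (V → Prop) × (V → V → Prop) | p.2 u v},
    measurableSet_setOf.2 ((measurable_pi_apply v).comp
      ((measurable_pi_apply u).comp measurable_snd)), rfl⟩

private lemma measurableSet_singleton_subgraph [Countable V] (F₀ : G.Subgraph) :
    MeasurableSet {F₀} := by
  have h : ({F₀} : Set G.Subgraph) =
      (⋂ v, {S | v ∈ S.verts ↔ v ∈ F₀.verts}) ∩ ⋂ (a) (b), {S | S.Adj a b ↔ F₀.Adj a b} := by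
    ext S
    simp only [Set.mem_singleton_iff, Set.mem_inter_iff, Set.mem_iInter, Set.mem_setOf_eq]
    constructor
    · rintro rfl; exact ⟨fun _ => Iff.rfl, fun _ _ => Iff.rfl⟩
    · rintro ⟨h1, h2⟩
      exact SimpleGraph.Subgraph.ext (Set.ext h1) (by funext a b; exact propext (h2 a b))
  rw [h]
  exact (MeasurableSet.iInter fun v =>
      msOfIff (measurableSet_mem_verts G v) (msOfConst (v ∈ F₀.verts))).inter
    (MeasurableSet.iInter fun a => MeasurableSet.iInter fun b =>
      msOfIff (measurableSet_adj G a b) (msOfConst (F₀.Adj a b)))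

private lemma finGibbs_singleton [Countable V] (β : ℝ≥0∞) (Γ H : G.Subgraph)
    (φ : V → V → Prop) (F₀ : G.Subgraph) :
    finGibbs G β Γ H φ {F₀} =
      (∑' F : G.Subgraph, gibbsWeight G β Γ H φ F)⁻¹ * gibbsWeight G β Γ H φ F₀ := by
  have hm := measurableSet_singleton_subgraph G F₀
  rw [finGibbs, Measure.smul_apply, Measure.sum_apply _ hm]
  have h1 : ∀ F : G.Subgraph, (gibbsWeight G β Γ H φ F • Measure.dirac F) {F₀}
      = gibbsWeight G β Γ H φ F * Set.indicator {F₀} 1 F := by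
    intro F
    rw [Measure.smul_apply, Measure.dirac_apply' _ hm, smul_eq_mul]
  have h2 : (∑' F : G.Subgraph, gibbsWeight G β Γ H φ F * Set.indicator {F₀} 1 F)
      = gibbsWeight G β Γ H φ F₀ := by
    rw [tsum_eq_single F₀ ?_, Set.indicator_of_mem (Set.mem_singleton F₀), Pi.one_apply, mul_one]
    intro F hF
    rw [Set.indicator_of_notMem (by simpa using hF), mul_zero]
  simp_rw [h1]
  rw [h2, smul_eq_mul]

private lemma finGibbs_toReal_pos [Countable V] {β : ℝ≥0∞} (hβ0 : β ≠ 0) (hβtop : β ≠ ⊤)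
    {Γ H : G.Subgraph} (hfin : H.verts.Finite) (φ : V → V → Prop) {F₀ : G.Subgraph}
    (hsfe : IsSpanningForestExtending G Γ H φ F₀) :
    0 < (finGibbs G β Γ H φ {F₀}).toReal := by
  obtain ⟨hZ1, hZtop⟩ := partition_bounds G hβtop hfin φ
  have hZ0 : (∑' F : G.Subgraph, gibbsWeight G β Γ H φ F) ≠ 0 :=
    fun h => by rw [h] at hZ1; simp at hZ1
  have hw : gibbsWeight G β Γ H φ F₀ = β ^ F₀.edgeSet.ncard := by
    rw [gibbsWeight, if_neg hβtop, if_pos hsfe]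
  rw [finGibbs_singleton]
  apply ENNReal.toReal_pos
  · exact mul_ne_zero (ENNReal.inv_ne_zero.2 hZtop) (by rw [hw]; exact pow_ne_zero _ hβ0)
  · exact ENNReal.mul_ne_top (ENNReal.inv_ne_top.2 hZ0) (gibbsWeight_ne_top G hβtop Γ H φ F₀)

/-! ### Existence of a good spanning forest -/

private lemma exists_good_forest (Γ : G.Subgraph) {H : G.Subgraph} (hfin : H.verts.Finite)
    (hconn : SubConnected G H) {φ : V → V → Prop} (hsym : ∀ u v, φ u v → φ v u) :
    ∃ F₀ : G.Subgraph, F₀ ≤ H ∧ F₀.verts = H.verts ∧ Extends G Γ H φ F₀ ∧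
      ∀ u ∈ H.verts, ∀ v ∈ H.verts,
        quotConn G F₀ (restrictRel (bdry G Γ H) φ) u v := by
  classical
  set ψ := restrictRel (bdry G Γ H) φ with hψ
  have hψsym : ∀ p q, ψ p q → ψ q p := fun p q h => ⟨h.2.1, h.1, hsym _ _ h.2.2⟩
  set S : Set G.Subgraph := {F | F ≤ H ∧ F.verts = H.verts ∧ Extends G Γ H φ F} with hS
  have hSfin : S.Finite := (candidates_finite G hfin).subset fun F hF => ⟨hF.1, hF.2.1⟩
  have hSne : edgelessSub G H.verts ∈ S :=
    ⟨edgelessSub_le G H, rfl, fun _ _ h => h.elim⟩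
  obtain ⟨F₀, hF₀S, hmax⟩ := hSfin.toFinset.exists_max_image
    (fun F => F.edgeSet.ncard) ⟨_, hSfin.mem_toFinset.2 hSne⟩
  rw [Set.Finite.mem_toFinset] at hF₀S
  obtain ⟨hle, hverts, hext⟩ := hF₀S
  refine ⟨F₀, hle, hverts, hext, ?_⟩
  by_contra hcon
  push_neg at hcon
  obtain ⟨u, hu, v, hv, hquv⟩ := hcon
  have hstepsym : Symmetric (fun p q => F₀.Adj p q ∨ (p ∈ F₀.verts ∧ q ∈ F₀.verts ∧ ψ p q)) := by
    rintro p q (h | ⟨h1, h2, h3⟩)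
    · exact Or.inl h.symm
    · exact Or.inr ⟨h2, h1, hψsym _ _ h3⟩
  have qcsymm : ∀ p q : V, quotConn G F₀ ψ p q → quotConn G F₀ ψ q p :=
    fun p q h => by
      haveI : Std.Symm (fun p q => F₀.Adj p q ∨ (p ∈ F₀.verts ∧ q ∈ F₀.verts ∧ ψ p q)) :=
        ⟨fun _ _ h' => hstepsym h'⟩
      unfold quotConn at h ⊢
      exact Std.Symm.symm _ _ h
  obtain ⟨a, b, hab, hqa, hqb⟩ :=
    exists_crossing (hconn.2 u hu v hv) (Relation.ReflTransGen.refl) hquv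
  have hnadj : ¬ F₀.Adj a b := fun h => hqb (hqa.tail (Or.inl h))
  have hqab : ¬ quotConn G F₀ ψ a b := fun h => hqb (hqa.trans h)
  have haH : a ∈ H.verts := H.edge_vert hab
  have hbH : b ∈ H.verts := H.edge_vert (H.adj_symm hab)
  set F₁ := F₀ ⊔ G.subgraphOfAdj (H.adj_sub hab) with hF₁
  have hsubverts : (G.subgraphOfAdj (H.adj_sub hab)).verts = {a, b} := rfl
  have hF₁verts : F₁.verts = H.verts := by
    rw [hF₁, SimpleGraph.Subgraph.verts_sup, hsubverts, hverts]
    apply Set.union_eq_self_of_subset_right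
    intro x hx
    rcases hx with rfl | hx
    · exact haH
    · rw [Set.mem_singleton_iff] at hx; subst hx; exact hbH
  have hF₁adj : ∀ p q, F₁.Adj p q ↔ F₀.Adj p q ∨ s(a, b) = s(p, q) := by
    intro p q
    rw [hF₁, SimpleGraph.Subgraph.sup_adj, SimpleGraph.subgraphOfAdj_adj]
  have hF₁le : F₁ ≤ H := sup_le hle (G.subgraphOfAdj_le_of_adj H hab)
  have hextF₁ : Extends G Γ H φ F₁ := by
    intro x y hxy hR
    by_cases hcase : s(x, y) = s(a, b)
    · have hgraph : F₁.deleteEdges {s(x, y)} = F₀ := by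
        refine SimpleGraph.Subgraph.ext ?_ ?_
        · rw [SimpleGraph.Subgraph.deleteEdges_verts, hF₁verts, hverts]
        · funext p q
          refine propext ?_
          rw [SimpleGraph.Subgraph.deleteEdges_adj, hcase]
          constructor
          · rintro ⟨hadj, hne⟩
            rcases (hF₁adj p q).1 hadj with h | h
            · exact h
            · exact absurd (Set.mem_singleton_iff.2 h.symm) hne
          · intro h
            refine ⟨(hF₁adj p q).2 (Or.inl h), ?_⟩
            intro hmem
            rw [Set.mem_singleton_iff] at hmem
            rcases Sym2.eq_iff.1 hmem with ⟨rfl, rfl⟩ | ⟨rfl, rfl⟩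
            · exact hnadj h
            · exact hnadj (F₀.adj_symm h)
      rw [hgraph] at hR
      rcases Sym2.eq_iff.1 hcase with ⟨rfl, rfl⟩ | ⟨rfl, rfl⟩
      · exact hqab hR
      · exact hqab (qcsymm _ _ hR)
    · have hxy₀ : F₀.Adj x y :=
        ((hF₁adj x y).1 hxy).resolve_right (fun h => hcase h.symm)
      have hmono : Relation.ReflTransGen (fun p q =>
          ((F₀.deleteEdges {s(x, y)}).Adj p q ∨ (p ∈ H.verts ∧ q ∈ H.verts ∧ ψ p q)) ∨
            (p = a ∧ q = b) ∨ (p = b ∧ q = a)) x y := by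
        refine Relation.ReflTransGen.mono ?_ _ _ hR
        rintro p q (hadj | hmem)
        · rw [SimpleGraph.Subgraph.deleteEdges_adj] at hadj
          rcases (hF₁adj p q).1 hadj.1 with h | h
          · exact Or.inl (Or.inl ((SimpleGraph.Subgraph.deleteEdges_adj _ p q).2 ⟨h, hadj.2⟩))
          · rcases Sym2.eq_iff.1 h with ⟨rfl, rfl⟩ | ⟨rfl, rfl⟩
            · exact Or.inr (Or.inl ⟨rfl, rfl⟩)
            · exact Or.inr (Or.inr ⟨rfl, rfl⟩)
        · refine Or.inl (Or.inr ?_)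
          rw [SimpleGraph.Subgraph.deleteEdges_verts] at hmem
          exact ⟨hF₁verts ▸ hmem.1, hF₁verts ▸ hmem.2.1, hmem.2.2⟩
      have hrq : ∀ p q : V, Relation.ReflTransGen (fun p q =>
          (F₀.deleteEdges {s(x, y)}).Adj p q ∨ (p ∈ H.verts ∧ q ∈ H.verts ∧ ψ p q)) p q →
          quotConn G (F₀.deleteEdges {s(x, y)}) ψ p q := by
        intro p q h
        refine Relation.ReflTransGen.mono ?_ _ _ h
        rintro p' q' (h' | h')
        · exact Or.inl h'
        · refine Or.inr ⟨?_, ?_, h'.2.2⟩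
          · rw [SimpleGraph.Subgraph.deleteEdges_verts, hverts]; exact h'.1
          · rw [SimpleGraph.Subgraph.deleteEdges_verts, hverts]; exact h'.2.1
      have hrq0 : ∀ p q : V, Relation.ReflTransGen (fun p q =>
          (F₀.deleteEdges {s(x, y)}).Adj p q ∨ (p ∈ H.verts ∧ q ∈ H.verts ∧ ψ p q)) p q →
          quotConn G F₀ ψ p q := by
        intro p q h
        refine Relation.ReflTransGen.mono ?_ _ _ h
        rintro p' q' (h' | h')
        · exact Or.inl ((SimpleGraph.Subgraph.deleteEdges_adj _ p' q').1 h').1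
        · exact Or.inr ⟨hverts.symm ▸ h'.1, hverts.symm ▸ h'.2.1, h'.2.2⟩
      rcases rtg_decomp hmono with h1 | ⟨h1, h2⟩ | ⟨h1, h2⟩
      · exact hext x y hxy₀ (hrq _ _ h1)
      · have hstep : quotConn G F₀ ψ x y := Relation.ReflTransGen.single (Or.inl hxy₀)
        exact hqab (((qcsymm _ _ (hrq0 _ _ h1)).trans hstep).trans (qcsymm _ _ (hrq0 _ _ h2)))
      · have hstep : quotConn G F₀ ψ x y := Relation.ReflTransGen.single (Or.inl hxy₀)
        exact hqab ((hrq0 _ _ h2).trans ((qcsymm _ _ hstep).trans (hrq0 _ _ h1)))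
  have hF₁S : F₁ ∈ S := ⟨hF₁le, hF₁verts, hextF₁⟩
  have hcard := hmax F₁ (hSfin.mem_toFinset.2 hF₁S)
  have hE : F₁.edgeSet = insert s(a, b) F₀.edgeSet := by
    rw [hF₁, SimpleGraph.Subgraph.edgeSet_sup, SimpleGraph.edgeSet_subgraphOfAdj,
      Set.union_singleton]
  have hEfin : F₀.edgeSet.Finite :=
    (edgeSet_finite_of_verts_finite G hfin).subset (SimpleGraph.Subgraph.edgeSet_mono hle)
  have hlt : F₀.edgeSet.ncard < F₁.edgeSet.ncard := by
    rw [hE, Set.ncard_insert_of_notMem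
      (fun h => hnadj (SimpleGraph.Subgraph.mem_edgeSet.1 h)) hEfin]
    omega
  omega

/-! ### Measurability of the relevant events -/

private lemma measurable_phiA (K : G.Subgraph) (u v : V) :
    Measurable fun A : AugSub G => A.2 K u v :=
  (measurable_pi_apply v).comp ((measurable_pi_apply u).comp
    ((measurable_pi_apply K).comp measurable_snd))

private lemma measurableSet_vertsA (v : V) :
    MeasurableSet {A : AugSub G | v ∈ A.1.verts} :=
  measurable_fst (measurableSet_mem_verts G v)

private lemma measurableSet_adjA (u v : V) :
    MeasurableSet {A : AugSub G | A.1.Adj u v} :=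
  measurable_fst (measurableSet_adj G u v)

private lemma measurableSet_noedge [Countable V] (H : G.Subgraph) :
    MeasurableSet {A : AugSub G | ∀ u v, ¬ (A.1 ⊓ H).Adj u v} := by
  have h : {A : AugSub G | ∀ u v, ¬ (A.1 ⊓ H).Adj u v} =
      ⋂ (u) (v), {A : AugSub G | ¬ (A.1.Adj u v ∧ H.Adj u v)} := by
    ext A
    simp only [Set.mem_setOf_eq, Set.mem_iInter, SimpleGraph.Subgraph.inf_adj]
  rw [h]
  exact MeasurableSet.iInter fun u => MeasurableSet.iInter fun v =>
    msOfNot (msOfAnd (measurableSet_adjA G u v) (msOfConst _))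

private lemma measurableSet_interEq [Countable V] (H F₀ : G.Subgraph) :
    MeasurableSet {A : AugSub G | A.1 ⊓ H = F₀} := by
  have h : {A : AugSub G | A.1 ⊓ H = F₀} =
      (⋂ v, {A : AugSub G | (v ∈ A.1.verts ∧ v ∈ H.verts) ↔ v ∈ F₀.verts}) ∩
        ⋂ (a) (b), {A : AugSub G | (A.1.Adj a b ∧ H.Adj a b) ↔ F₀.Adj a b} := by
    ext A
    simp only [Set.mem_setOf_eq, Set.mem_inter_iff, Set.mem_iInter]
    constructor
    · rintro rfl
      constructor
      · intro v; simp [SimpleGraph.Subgraph.verts_inf]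
      · intro a b; simp [SimpleGraph.Subgraph.inf_adj]
    · rintro ⟨h1, h2⟩
      refine SimpleGraph.Subgraph.ext ?_ ?_
      · rw [SimpleGraph.Subgraph.verts_inf]; ext v
        simpa using h1 v
      · funext a b
        refine propext ?_
        rw [SimpleGraph.Subgraph.inf_adj]
        exact h2 a b
  rw [h]
  exact (MeasurableSet.iInter fun v =>
      msOfIff (msOfAnd (measurableSet_vertsA G v) (msOfConst (v ∈ H.verts)))
        (msOfConst (v ∈ F₀.verts))).inter
    (MeasurableSet.iInter fun a => MeasurableSet.iInter fun b =>
      msOfIff (msOfAnd (measurableSet_adjA G a b) (msOfConst (H.Adj a b)))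
        (msOfConst (F₀.Adj a b)))

private lemma measurableSet_merge [Countable V] (H : G.Subgraph) :
    MeasurableSet {A : AugSub G | ∀ u ∈ H.verts, ∀ v ∈ H.verts, augConn G A u v} := by
  have h : {A : AugSub G | ∀ u ∈ H.verts, ∀ v ∈ H.verts, augConn G A u v} =
      ⋂ (u) (_ : u ∈ H.verts) (v) (_ : v ∈ H.verts),
        {A : AugSub G | A.2 (pairSub G u v) u v} := by
    ext A
    simp only [Set.mem_setOf_eq, Set.mem_iInter]
    rfl
  rw [h]
  exact MeasurableSet.iInter fun u => MeasurableSet.iInter fun _ =>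
    MeasurableSet.iInter fun v => MeasurableSet.iInter fun _ =>
      measurableSet_setOf.2 (measurable_phiA G (pairSub G u v) u v)

private lemma measurableSet_B_ambient [Countable V] (H F₀ : G.Subgraph) :
    MeasurableSet {A : AugSub G | ∀ u ∈ H.verts, ∀ v ∈ H.verts,
      quotConn G F₀ (restrictRel (bdry G ⊤ H) (A.2 H)) u v} := by
  have h : {A : AugSub G | ∀ u ∈ H.verts, ∀ v ∈ H.verts,
      quotConn G F₀ (restrictRel (bdry G ⊤ H) (A.2 H)) u v} =
      ⋂ (u) (_ : u ∈ H.verts) (v) (_ : v ∈ H.verts),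
        {A : AugSub G | Relation.ReflTransGen (fun a b => F₀.Adj a b ∨
          (a ∈ F₀.verts ∧ b ∈ F₀.verts ∧
            (a ∈ bdry G ⊤ H ∧ b ∈ bdry G ⊤ H ∧ A.2 H a b))) u v} := by
    ext A
    simp only [Set.mem_setOf_eq, Set.mem_iInter]
    rfl
  rw [h]
  refine MeasurableSet.iInter fun u => MeasurableSet.iInter fun _ =>
    MeasurableSet.iInter fun v => MeasurableSet.iInter fun _ =>
      measurableSet_rtg (r := fun (A : AugSub G) a b => F₀.Adj a b ∨
        (a ∈ F₀.verts ∧ b ∈ F₀.verts ∧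
          (a ∈ bdry G ⊤ H ∧ b ∈ bdry G ⊤ H ∧ A.2 H a b))) (fun a b => ?_) u v
  exact msOfOr (msOfConst _) (msOfAnd (msOfConst _)
    (msOfAnd (msOfConst _) (msOfAnd (msOfConst _) (msOfAnd (msOfConst _)
      (measurableSet_setOf.2 (measurable_phiA G H a b))))))

private lemma measurableSet_B [Countable V] {H : G.Subgraph} (hfin : H.verts.Finite)
    (F₀ : G.Subgraph) :
    MeasurableSet[outSigma G ⊤ H] {A : AugSub G | ∀ u ∈ H.verts, ∀ v ∈ H.verts,
      quotConn G F₀ (restrictRel (bdry G ⊤ H) (A.2 H)) u v} := by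
  refine ⟨{p : G.Subgraph × (G.Subgraph → V → V → Prop) | ∀ u ∈ H.verts, ∀ v ∈ H.verts,
      quotConn G F₀ (restrictRel (bdry G ⊤ H) (p.2 H)) u v}, ?_, ?_⟩
  · have h : {p : G.Subgraph × (G.Subgraph → V → V → Prop) | ∀ u ∈ H.verts, ∀ v ∈ H.verts,
        quotConn G F₀ (restrictRel (bdry G ⊤ H) (p.2 H)) u v} =
        ⋂ (u) (_ : u ∈ H.verts) (v) (_ : v ∈ H.verts),
          {p : G.Subgraph × (G.Subgraph → V → V → Prop) |
            Relation.ReflTransGen (fun a b => F₀.Adj a b ∨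
              (a ∈ F₀.verts ∧ b ∈ F₀.verts ∧
                (a ∈ bdry G ⊤ H ∧ b ∈ bdry G ⊤ H ∧ p.2 H a b))) u v} := by
      ext p
      simp only [Set.mem_setOf_eq, Set.mem_iInter]
      rfl
    rw [h]
    refine MeasurableSet.iInter fun u => MeasurableSet.iInter fun _ =>
      MeasurableSet.iInter fun v => MeasurableSet.iInter fun _ =>
        measurableSet_rtg (r := fun (p : G.Subgraph × (G.Subgraph → V → V → Prop)) a b =>
          F₀.Adj a b ∨ (a ∈ F₀.verts ∧ b ∈ F₀.verts ∧
            (a ∈ bdry G ⊤ H ∧ b ∈ bdry G ⊤ H ∧ p.2 H a b))) (fun a b => ?_) u v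
    exact msOfOr (msOfConst _) (msOfAnd (msOfConst _)
      (msOfAnd (msOfConst _) (msOfAnd (msOfConst _) (msOfAnd (msOfConst _)
        (measurableSet_setOf.2 ((measurable_pi_apply b).comp ((measurable_pi_apply a).comp
          ((measurable_pi_apply H).comp measurable_snd))))))))
  · ext A
    simp only [Set.mem_preimage, Set.mem_setOf_eq]
    have hφ : (outsideMap G ⊤ H A).2 H = A.2 H := by
      funext a b
      exact propext (and_iff_right ⟨le_rfl, le_top, hfin⟩)
    rw [hφ]

private lemma measurableSet_consistencyEvent [Countable V] (H : G.Subgraph) (u v : V) :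
    MeasurableSet {A : AugSub G | A.2 (pairSub G u v) u v ↔
      quotConn G ((A.1 ⊓ H).deleteEdges (pairSub G u v).edgeSet)
        (restrictRel (bdry G ⊤ H) (A.2 H)) u v} := by
  refine msOfIff (measurableSet_setOf.2 (measurable_phiA G (pairSub G u v) u v)) ?_
  have h : {A : AugSub G | quotConn G ((A.1 ⊓ H).deleteEdges (pairSub G u v).edgeSet)
      (restrictRel (bdry G ⊤ H) (A.2 H)) u v} =
      {A : AugSub G | Relation.ReflTransGen (fun a b =>
        ((A.1.Adj a b ∧ H.Adj a b) ∧ ¬ s(a, b) ∈ (pairSub G u v).edgeSet) ∨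
          ((a ∈ A.1.verts ∧ a ∈ H.verts) ∧ (b ∈ A.1.verts ∧ b ∈ H.verts) ∧
            (a ∈ bdry G ⊤ H ∧ b ∈ bdry G ⊤ H ∧ A.2 H a b))) u v} := by
    ext A
    rfl
  rw [h]
  refine measurableSet_rtg (r := fun (A : AugSub G) a b =>
    ((A.1.Adj a b ∧ H.Adj a b) ∧ ¬ s(a, b) ∈ (pairSub G u v).edgeSet) ∨
      ((a ∈ A.1.verts ∧ a ∈ H.verts) ∧ (b ∈ A.1.verts ∧ b ∈ H.verts) ∧
        (a ∈ bdry G ⊤ H ∧ b ∈ bdry G ⊤ H ∧ A.2 H a b))) (fun a b => ?_) u v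
  exact msOfOr
    (msOfAnd (msOfAnd (measurableSet_adjA G a b) (msOfConst _)) (msOfConst _))
    (msOfAnd (msOfAnd (measurableSet_vertsA G a) (msOfConst _))
      (msOfAnd (msOfAnd (measurableSet_vertsA G b) (msOfConst _))
        (msOfAnd (msOfConst _) (msOfAnd (msOfConst _)
          (measurableSet_setOf.2 (measurable_phiA G H a b))))))

private lemma zd_exists_adj {d : ℕ} (hd : 0 < d) (x : Fin d → ℤ) :
    ∃ y, (ZdGraph d).Adj x y := by
  refine ⟨Function.update x ⟨0, hd⟩ (x ⟨0, hd⟩ + 1), ?_⟩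
  show (∑ i, (x i - Function.update x ⟨0, hd⟩ (x ⟨0, hd⟩ + 1) i).natAbs) = 1
  rw [Finset.sum_eq_single (⟨0, hd⟩ : Fin d)]
  · rw [Function.update_self]; omega
  · intro i _ hi
    rw [Function.update_of_ne hi]; omega
  · intro h; exact absurd (Finset.mem_univ _) h

end Aux

/-- Lemma: deletion tolerance and merge tolerance. Fix `d ≥ 2` and
`β ∈ (0,∞)`, let `Q` be an augmented `β`-arboreal gas Gibbs measure on `ℤ^d` and let
`(A,Φ) ~ Q`. Then (1) for every finite subgraph `H`, the conditional probability given
`𝒢_H` that `A ∩ H` has no edges is a.s. positive, and (2) for every finite connected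
subgraph `H`, the conditional probability given `𝒢_H` that all vertices of `H` lie in a
single augmented connectivity class is a.s. positive. -/
theorem deletion_and_merge_tolerance
    (d : ℕ) (hd : 2 ≤ d) (β : ℝ≥0∞) (hβ0 : 0 < β) (hβtop : β ≠ ⊤)
    (Q : Measure (AugSub (ZdGraph d))) (hQ : IsAugGibbs (ZdGraph d) β ⊤ Q) :
    (∀ H : (ZdGraph d).Subgraph, H.verts.Finite →
      ∀ᵐ A ∂Q, 0 <
        (Q[({A : AugSub (ZdGraph d) | ∀ u v, ¬ (A.1 ⊓ H).Adj u v}).indicator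
          (fun _ => (1 : ℝ)) | outSigma (ZdGraph d) ⊤ H]) A) ∧
    (∀ H : (ZdGraph d).Subgraph, H.verts.Finite → SubConnected (ZdGraph d) H →
      ∀ᵐ A ∂Q, 0 <
        (Q[({A : AugSub (ZdGraph d) |
            ∀ u ∈ H.verts, ∀ v ∈ H.verts, augConn (ZdGraph d) A u v}).indicator
          (fun _ => (1 : ℝ)) | outSigma (ZdGraph d) ⊤ H]) A) := by
  classical
  obtain ⟨hprob, hX1, hgibbs⟩ := hQ
  haveI := hprob
  constructor
  · -- deletion tolerance
    intro H hfin
    have hF₀le : edgelessSub (ZdGraph d) H.verts ≤ H := edgelessSub_le _ H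
    have hce := hgibbs H le_top hfin _ hF₀le
    have hCsub : {A : AugSub (ZdGraph d) | A.1 ⊓ H = edgelessSub (ZdGraph d) H.verts} ⊆
        {A : AugSub (ZdGraph d) | ∀ u v, ¬ (A.1 ⊓ H).Adj u v} := by
      intro A hA
      rw [Set.mem_setOf_eq] at hA
      intro u v h
      rw [hA] at h
      exact h
    have hint1 : Integrable (({A : AugSub (ZdGraph d) |
        A.1 ⊓ H = edgelessSub (ZdGraph d) H.verts}).indicator (fun _ => (1:ℝ))) Q :=
      (integrable_const 1).indicator (measurableSet_interEq (ZdGraph d) H _)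
    have hint2 : Integrable (({A : AugSub (ZdGraph d) |
        ∀ u v, ¬ (A.1 ⊓ H).Adj u v}).indicator (fun _ => (1:ℝ))) Q :=
      (integrable_const 1).indicator (measurableSet_noedge (ZdGraph d) H)
    have hmono := condExp_mono (m := outSigma (ZdGraph d) ⊤ H) hint1 hint2
      (Filter.Eventually.of_forall fun A =>
        Set.indicator_le_indicator_of_subset hCsub (fun _ => zero_le_one) A)
    filter_upwards [hmono, hce] with A h1 h2
    have hpos := finGibbs_toReal_pos (ZdGraph d) (ne_of_gt hβ0) hβtop hfin (A.2 H)
      (edgeless_sfe (ZdGraph d) ⊤ H (A.2 H))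
    rw [← h2] at hpos
    exact hpos.trans_le h1
  · -- merge tolerance
    intro H hfin hconn
    set M : Set (AugSub (ZdGraph d)) :=
      {A : AugSub (ZdGraph d) | ∀ u ∈ H.verts, ∀ v ∈ H.verts, augConn (ZdGraph d) A u v}
      with hMdef
    set Bset : (ZdGraph d).Subgraph → Set (AugSub (ZdGraph d)) := fun F₀ =>
      {A : AugSub (ZdGraph d) | ∀ u ∈ H.verts, ∀ v ∈ H.verts,
        quotConn (ZdGraph d) F₀ (restrictRel (bdry (ZdGraph d) ⊤ H) (A.2 H)) u v} with hBdef
    set Y1 : Set (AugSub (ZdGraph d)) :=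
      {A : AugSub (ZdGraph d) | ∀ u v, A.2 H u v → A.2 H v u} with hY1def
    set Y2 : Set (AugSub (ZdGraph d)) :=
      {A : AugSub (ZdGraph d) | ∀ u ∈ H.verts, ∀ v ∈ H.verts,
        (A.2 (pairSub (ZdGraph d) u v) u v ↔
          quotConn (ZdGraph d) ((A.1 ⊓ H).deleteEdges (pairSub (ZdGraph d) u v).edgeSet)
            (restrictRel (bdry (ZdGraph d) ⊤ H) (A.2 H)) u v)} with hY2def
    have hY1meas : MeasurableSet Y1 := by
      have h : Y1 = ⋂ (u) (v), {A : AugSub (ZdGraph d) | A.2 H u v → A.2 H v u} := by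
        ext A; simp only [hY1def, Set.mem_setOf_eq, Set.mem_iInter]
      rw [h]
      exact MeasurableSet.iInter fun u => MeasurableSet.iInter fun v =>
        msOfImp (measurableSet_setOf.2 (measurable_phiA (ZdGraph d) H u v))
          (measurableSet_setOf.2 (measurable_phiA (ZdGraph d) H v u))
    have hY2meas : MeasurableSet Y2 := by
      have h : Y2 = ⋂ (u) (_ : u ∈ H.verts) (v) (_ : v ∈ H.verts),
          {A : AugSub (ZdGraph d) | A.2 (pairSub (ZdGraph d) u v) u v ↔
            quotConn (ZdGraph d) ((A.1 ⊓ H).deleteEdges (pairSub (ZdGraph d) u v).edgeSet)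
              (restrictRel (bdry (ZdGraph d) ⊤ H) (A.2 H)) u v} := by
        ext A; simp only [hY2def, Set.mem_setOf_eq, Set.mem_iInter]
      rw [h]
      exact MeasurableSet.iInter fun u => MeasurableSet.iInter fun _ =>
        MeasurableSet.iInter fun v => MeasurableSet.iInter fun _ =>
          measurableSet_consistencyEvent (ZdGraph d) H u v
    have hXY : {A : AugSub (ZdGraph d) | IsAugmentedIn (ZdGraph d) ⊤ A} ⊆ Y1 ∩ Y2 := by
      intro A hA
      rw [Set.mem_setOf_eq] at hA
      constructor
      · intro u v h
        exact (hA.2.1 H le_top hfin).2.2.1 u v h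
      · intro u hu v hv
        have hbu : u ∈ bdry (ZdGraph d) ⊤ (pairSub (ZdGraph d) u v) := by
          obtain ⟨y, hy⟩ := zd_exists_adj (show 0 < d by omega) u
          exact ⟨Or.inl rfl, y, SimpleGraph.Subgraph.top_adj.2 hy, fun h => h⟩
        have hbv : v ∈ bdry (ZdGraph d) ⊤ (pairSub (ZdGraph d) u v) := by
          obtain ⟨y, hy⟩ := zd_exists_adj (show 0 < d by omega) v
          exact ⟨Or.inr rfl, y, SimpleGraph.Subgraph.top_adj.2 hy, fun h => h⟩
        exact hA.2.2 (pairSub (ZdGraph d) u v) H (pairSub_le (ZdGraph d) hu hv) le_top hfin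
          u v hbu hbv
    have hQY : Q (Y1 ∩ Y2) = 1 := le_antisymm prob_le_one (hX1 ▸ measure_mono hXY)
    have hYae : ∀ᵐ A ∂Q, A ∈ Y1 ∩ Y2 := by
      rw [MeasureTheory.ae_iff]
      have hc : {A : AugSub (ZdGraph d) | ¬ A ∈ Y1 ∩ Y2} = (Y1 ∩ Y2)ᶜ := rfl
      rw [hc, measure_compl (hY1meas.inter hY2meas) (measure_ne_top _ _), hQY, measure_univ,
        tsub_self]
    have key : ∀ F₀ ∈ {F : (ZdGraph d).Subgraph | F ≤ H ∧ F.verts = H.verts}, ∀ᵐ A ∂Q,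
        A ∈ Bset F₀ → (finGibbs (ZdGraph d) β ⊤ H (A.2 H) {F₀}).toReal ≤
          (Q[M.indicator (fun _ => (1:ℝ)) | outSigma (ZdGraph d) ⊤ H]) A := by
      intro F₀ hF₀
      have hCm := measurableSet_interEq (ZdGraph d) H F₀
      have hBm : MeasurableSet[outSigma (ZdGraph d) ⊤ H] (Bset F₀) :=
        measurableSet_B (ZdGraph d) hfin F₀
      have hBamb : MeasurableSet (Bset F₀) := measurableSet_B_ambient (ZdGraph d) H F₀
      have hint1 : Integrable (({A : AugSub (ZdGraph d) | A.1 ⊓ H = F₀}).indicator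
          (fun _ => (1:ℝ))) Q := (integrable_const 1).indicator hCm
      have h2 := condExp_indicator (m := outSigma (ZdGraph d) ⊤ H) (μ := Q) hint1 hBm
      have h5 := hgibbs H le_top hfin F₀ hF₀.1
      have hintM : Integrable (M.indicator (fun _ => (1:ℝ))) Q :=
        (integrable_const 1).indicator (measurableSet_merge (ZdGraph d) H)
      have hintBC : Integrable ((Bset F₀ ∩ {A : AugSub (ZdGraph d) | A.1 ⊓ H = F₀}).indicator
          (fun _ => (1:ℝ))) Q := (integrable_const 1).indicator (hBamb.inter hCm)
      have hle : (Bset F₀ ∩ {A : AugSub (ZdGraph d) | A.1 ⊓ H = F₀}).indicator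
          (fun _ => (1:ℝ)) ≤ᵐ[Q] M.indicator (fun _ => (1:ℝ)) := by
        filter_upwards [hYae] with A hAY
        by_cases hmem : A ∈ Bset F₀ ∩ {A : AugSub (ZdGraph d) | A.1 ⊓ H = F₀}
        · have hM : A ∈ M := by
            intro u hu v hv
            refine (hAY.2 u hu v hv).2 ?_
            rw [show A.1 ⊓ H = F₀ from hmem.2, pairSub_edgeSet,
              SimpleGraph.Subgraph.deleteEdges_empty_eq]
            exact hmem.1 u hu v hv
          rw [Set.indicator_of_mem hmem, Set.indicator_of_mem hM]
        · rw [Set.indicator_of_notMem hmem]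
          exact Set.indicator_nonneg (fun _ _ => zero_le_one) A
      have h4 := condExp_mono (m := outSigma (ZdGraph d) ⊤ H) hintBC hintM hle
      rw [show (Bset F₀ ∩ {A : AugSub (ZdGraph d) | A.1 ⊓ H = F₀}).indicator
          (fun _ => (1:ℝ)) = (Bset F₀).indicator
            (({A : AugSub (ZdGraph d) | A.1 ⊓ H = F₀}).indicator (fun _ => (1:ℝ)))
        from (Set.indicator_indicator _ _ _).symm] at h4
      filter_upwards [h4, h2, h5] with A h4A h2A h5A hB
      have e1 : (finGibbs (ZdGraph d) β ⊤ H (A.2 H) {F₀}).toReal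
          = (Bset F₀).indicator
            (Q[({A : AugSub (ZdGraph d) | A.1 ⊓ H = F₀}).indicator (fun _ => (1:ℝ)) |
              outSigma (ZdGraph d) ⊤ H]) A := by
        rw [Set.indicator_of_mem hB, h5A]
      rw [e1, ← h2A]
      exact h4A
    have hcand : {F : (ZdGraph d).Subgraph | F ≤ H ∧ F.verts = H.verts}.Countable :=
      (candidates_finite (ZdGraph d) hfin).countable
    have hae := (ae_ball_iff hcand).2 key
    filter_upwards [hae, hYae] with A hA hAY
    obtain ⟨F₀, h1, h2, h3, h4⟩ := exists_good_forest (ZdGraph d) (⊤ : (ZdGraph d).Subgraph)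
      hfin hconn (fun u v h => hAY.1 u v h)
    have hApos := finGibbs_toReal_pos (ZdGraph d) (ne_of_gt hβ0) hβtop hfin (A.2 H)
      ⟨h1, h2, h3⟩
    exact lt_of_lt_of_le hApos (hA F₀ ⟨h1, h2⟩ (fun u hu v hv => h4 u hu v hv))

end ArborealGas

end
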